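/- Let a_k = ⌊1/2 + √(2k)⌋ be the self-counting sequence 1,2,2,3,3,3,4,4,4,4,… . Then for every positive real x: Σ_{k=1}^{⌊x⌋} a_k = (x√(8x+1))/3 - (5√(8x+1))/24 - (√(8x+1)/2)·B_1({x}) + B_1({y})·B_1({x}) + (1/2)B_1({y}) - (√(8x+1)/4)·B_2({y}) + (1/6)B_3({y}), where y = (√(8x+1) - 1)/2 and {·} denotes the fractional part. -/
import Mathlib


open Finset

/-- Unsigned Stirling numbers of the first kind. -/
def stirling1 : ℕ → ℕ → ℕ
  | 0, 0 => 1
  | 0, _ + 1 => 0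
  | _ + 1, 0 => 0
  | k + 1, l + 1 => stirling1 k l + k * stirling1 k (l + 1)

/-- The Bernoulli polynomial `B_n` evaluated at a real point. -/
noncomputable def bernoulliPoly (n : ℕ) (x : ℝ) : ℝ :=
  ((Polynomial.bernoulli n).map (algebraMap ℚ ℝ)).eval x

lemma bp1 (t : ℝ) : bernoulliPoly 1 t = t - 1/2 := by
  simp [bernoulliPoly, Polynomial.bernoulli, Finset.sum_range_succ]
  norm_num [bernoulli_one]; ring

lemma bp2 (t : ℝ) : bernoulliPoly 2 t = t^2 - t + 1/6 := by
  simp [bernoulliPoly, Polynomial.bernoulli, Finset.sum_range_succ]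
  norm_num [bernoulli_one, bernoulli_eq_bernoulli'_of_ne_one (show (2:ℕ) ≠ 1 by norm_num),
    bernoulli'_two]
  ring

lemma bp3 (t : ℝ) : bernoulliPoly 3 t = t^3 - (3/2)*t^2 + (1/2)*t := by
  simp [bernoulliPoly, Polynomial.bernoulli, Finset.sum_range_succ]
  norm_num [bernoulli_one, bernoulli_eq_bernoulli'_of_ne_one (show (2:ℕ) ≠ 1 by norm_num),
    bernoulli_eq_bernoulli'_of_ne_one (show (3:ℕ) ≠ 1 by norm_num),
    bernoulli'_two, bernoulli'_three]
  ring

/-- triangular numbers -/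
def T : ℕ → ℕ
  | 0 => 0
  | m + 1 => T m + m + 1

lemma Tcast (m : ℕ) : (T m : ℝ) = m * (m + 1) / 2 := by
  induction m with
  | zero => simp [T]
  | succ m ih => simp only [T]; push_cast; rw [ih]; ring

lemma floor_eq (m k : ℕ) (h1 : T m < k) (h2 : k ≤ T (m+1)) :
    Nat.floor (1 / 2 + Real.sqrt (2 * k)) = m + 1 := by
  have hk1 : (m:ℝ) * (m+1) / 2 + 1 ≤ (k:ℝ) := by
    have := Tcast m; have : (T m : ℝ) + 1 ≤ (k:ℝ) := by exact_mod_cast h1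
    rw [Tcast m] at this; linarith
  have hk2 : (k:ℝ) ≤ (m+1) * (m+2) / 2 := by
    have : (k:ℝ) ≤ (T (m+1) : ℝ) := by exact_mod_cast h2
    rw [Tcast (m+1)] at this; push_cast at this ⊢; linarith
  have hs1 : (m:ℝ) + 1/2 ≤ Real.sqrt (2*k) := by
    rw [Real.le_sqrt (by positivity) (by positivity)]
    nlinarith
  have hs2 : Real.sqrt (2*k) < (m:ℝ) + 3/2 := by
    rw [Real.sqrt_lt' (by positivity)]
    nlinarith
  rw [Nat.floor_eq_iff (by positivity)]
  constructor
  · push_cast; linarith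
  · push_cast; linarith

lemma block_sum (m : ℕ) :
    ∑ k ∈ Finset.Ioc 0 (T m), (Nat.floor (1 / 2 + Real.sqrt (2 * k)) : ℝ)
      = m * (m+1) * (2*m+1) / 6 := by
  induction m with
  | zero => simp [T]
  | succ m ih =>
    have hle : T m ≤ T (m+1) := by simp [T]; omega
    rw [← Finset.sum_Ioc_consecutive _ (Nat.zero_le (T m)) hle, ih]
    have hconst : ∑ k ∈ Finset.Ioc (T m) (T (m+1)), (Nat.floor (1 / 2 + Real.sqrt (2 * k)) : ℝ)
        = ∑ k ∈ Finset.Ioc (T m) (T (m+1)), ((m:ℝ) + 1) := by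
      apply Finset.sum_congr rfl
      intro k hk
      simp only [Finset.mem_Ioc] at hk
      rw [floor_eq m k hk.1 hk.2]; push_cast; ring
    rw [hconst, Finset.sum_const, Nat.card_Ioc]
    have : T (m+1) - T m = m + 1 := by simp [T]; omega
    rw [this]; push_cast; ring

lemma key (m n : ℕ) (h1 : T m ≤ n) (h2 : n ≤ T (m+1)) :
    ∑ k ∈ Finset.Icc 1 n, (Nat.floor (1 / 2 + Real.sqrt (2 * k)) : ℝ)
      = m * n - ((m:ℝ)^3 - m) / 6 + n - m * (m+1) / 2 := by
  have hIcc : Finset.Icc 1 n = Finset.Ioc 0 n := rfl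
  rw [hIcc, ← Finset.sum_Ioc_consecutive _ (Nat.zero_le (T m)) h1, block_sum]
  have hconst : ∑ k ∈ Finset.Ioc (T m) n, (Nat.floor (1 / 2 + Real.sqrt (2 * k)) : ℝ)
      = ∑ k ∈ Finset.Ioc (T m) n, ((m:ℝ) + 1) := by
    apply Finset.sum_congr rfl
    intro k hk
    simp only [Finset.mem_Ioc] at hk
    rw [floor_eq m k hk.1 (le_trans hk.2 h2)]; push_cast; ring
  rw [hconst, Finset.sum_const, Nat.card_Ioc, nsmul_eq_mul, Nat.cast_sub h1, Tcast]
  ring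


/-- The self-counting summation formula. -/
theorem self_counting_sum (x : ℝ) (hx : 0 < x) :
    ∑ k ∈ Finset.Icc 1 (Nat.floor x), (Nat.floor (1 / 2 + Real.sqrt (2 * k)) : ℝ) =
      x * Real.sqrt (8 * x + 1) / 3 - 5 * Real.sqrt (8 * x + 1) / 24
      - (Real.sqrt (8 * x + 1) / 2) * bernoulliPoly 1 (Int.fract x)
      + bernoulliPoly 1 (Int.fract ((Real.sqrt (8 * x + 1) - 1) / 2)) * bernoulliPoly 1 (Int.fract x)
      + (1 / 2) * bernoulliPoly 1 (Int.fract ((Real.sqrt (8 * x + 1) - 1) / 2))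
      - (Real.sqrt (8 * x + 1) / 4) * bernoulliPoly 2 (Int.fract ((Real.sqrt (8 * x + 1) - 1) / 2))
      + (1 / 6) * bernoulliPoly 3 (Int.fract ((Real.sqrt (8 * x + 1) - 1) / 2)) := by
  set s := Real.sqrt (8 * x + 1) with hs
  set y := (s - 1) / 2 with hy
  have hs2 : s ^ 2 = 8 * x + 1 := Real.sq_sqrt (by linarith)
  have hs1 : 1 ≤ s := by
    rw [hs]
    have : Real.sqrt 1 ≤ Real.sqrt (8 * x + 1) := Real.sqrt_le_sqrt (by linarith)
    simpa using this
  have hy0 : 0 ≤ y := by rw [hy]; linarith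
  have hxy : x = y * (y + 1) / 2 := by rw [hy]; nlinarith [hs2]
  set n := Nat.floor x with hn
  set m := Nat.floor y with hm
  have hmy : (m : ℝ) ≤ y := Nat.floor_le hy0
  have hym : y < (m : ℝ) + 1 := Nat.lt_floor_add_one y
  have h1 : T m ≤ n := by
    rw [hn]
    apply Nat.le_floor
    rw [Tcast]
    nlinarith
  have h2 : n ≤ T (m + 1) := by
    have : (n : ℝ) ≤ x := Nat.floor_le hx.le
    have hlt : x < (T (m+1) : ℝ) := by rw [Tcast]; push_cast; nlinarith
    have : (n : ℝ) < (T (m+1) : ℝ) := lt_of_le_of_lt this hlt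
    exact_mod_cast this.le
  rw [key m n h1 h2]
  have hfx : Int.fract x = x - (n:ℝ) := by
    rw [Int.fract, natCast_floor_eq_intCast_floor hx.le]
  have hfy : Int.fract y = y - (m:ℝ) := by
    rw [Int.fract, natCast_floor_eq_intCast_floor hy0]
  have hsy : s = 2*y + 1 := by rw [hy]; ring
  rw [bp1, bp1, bp2, bp3, hfx, hfy, hsy]
  linear_combination (-((2*y+1)/3 - (2*y+1)/2 + (y - (m:ℝ) - 1/2))) * hxy
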